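/- Let 𝔏 be a singleton, and on decorated (hence undecorated) rooted trees define insertion τ₁ ▷_ins τ₂ := Σ_τ M(τ₁,τ₂;τ) τ, where M(τ₁,τ₂;τ) counts ways of inserting τ₁ at a node of τ₂; recursively, τ' ▷_ins • = τ' (• the single node) and τ' ▷_ins (• Π_j I(τ_j)) = (simultaneous grafting of τ₁,…,τ_k onto τ') + Σ_j • I(τ' ▷_ins τ_j) Π_{i≠j} I(τ_i). Then the map Ψ (given by Ψ[•] = z_0 and Ψ[• Π I(τ_j)] = k! z_k Π Ψ[τ_j]) satisfies Ψ[τ ▷_ins τ'] = Ψ[τ] ▷ Ψ[τ'], where on polynomials π ▷ π' := Σ_k (1/k!)(D^k π) ∂_{z_k} π' and D = Σ_k (k+1) z_{k+1} ∂_{z_k}. -/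

import Mathlib

open MvPolynomial

/-- Undecorated plane rooted trees (`𝔏` a singleton, so decorations are dropped). -/
inductive PTree : Type where
  | node : List PTree → PTree

/-- `Ψ[•] = z_0` and `Ψ[• Π_{j=1}^k I(τ_j)] = k! z_k Π_j Ψ[τ_j]`, with values in
`ℝ[z_k : k ∈ ℕ]`. -/
noncomputable def Psi : PTree → MvPolynomial ℕ ℝ
  | .node ts =>
      (Nat.factorial ts.length) •
        (X ts.length * (ts.attach.map (fun t => Psi t.1)).prod)
decreasing_by
  have := List.sizeOf_lt_of_mem t.2
  simp only [PTree.node.sizeOf_spec]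
  omega

/-- All ways of distributing the elements of a list into `m` (ordered) bins. -/
def distribs {α : Type} : List α → ℕ → List (List (List α))
  | [], m => [List.replicate m []]
  | a :: l, m =>
      (distribs l m).flatMap (fun d =>
        (List.range m).map (fun i => d.set i (a :: d.getD i [])))

mutual
/-- Simultaneous grafting: `simGraft [τ₁,…,τ_k] τ'` is the list (with multiplicities) of
all trees obtained by grafting each `τ_i` at some node of `τ'`, i.e.
`ρ_↷(τ₁ ⋆ ⋯ ⋆ τ_k)τ'` from the Guin–Oudom construction of the grafting pre-Lie
algebra. -/
def simGraft : List PTree → PTree → List PTree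
  | τs, .node cs =>
      (distribs τs (cs.length + 1)).flatMap (fun d =>
        (childrenChoices (d.drop 1) cs).map (fun sel => .node ((d.getD 0 []) ++ sel)))

/-- All choices of replacing each child `c_j` by an element of
`simGraft (j-th bin) c_j`. -/
def childrenChoices : List (List PTree) → List PTree → List (List PTree)
  | _, [] => [[]]
  | bins, c :: cs =>
      (simGraft (bins.getD 0 []) c).flatMap (fun c' =>
        (childrenChoices (bins.drop 1) cs).map (fun rest => c' :: rest))
end

mutual
/-- Insertion `τ' ▷_ins τ` as a list of trees with multiplicities:
`τ' ▷_ins • = τ'` and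
`τ' ▷_ins (• Π_j I(τ_j)) = (simultaneous grafting of the `τ_j` onto `τ'`) +
Σ_j • I(τ' ▷_ins τ_j) Π_{i≠j} I(τ_i)`. -/
def ins (τ' : PTree) : PTree → List PTree
  | .node cs => simGraft cs τ' ++ (insAux τ' cs).map .node

def insAux (τ' : PTree) : List PTree → List (List PTree)
  | [] => []
  | c :: cs => ((ins τ' c).map (· :: cs)) ++ ((insAux τ' cs).map (c :: ·))
end

/-- The insertion pre-Lie product on polynomials,
`π ▷ π' := Σ_k (1/k!)(D^k π) ∂_{z_k} π'` (the sum is effectively finite). -/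
noncomputable def triIns (D : MvPolynomial ℕ ℝ →ₗ[ℝ] MvPolynomial ℕ ℝ)
    (π π' : MvPolynomial ℕ ℝ) : MvPolynomial ℕ ℝ :=
  ∑ k ∈ π'.vars,
    ((Nat.factorial k : ℝ))⁻¹ •
      (((D : Module.End ℝ (MvPolynomial ℕ ℝ)) ^ k) π * pderiv k π')


/- ===================== auxiliary development ===================== -/

abbrev MvP := MvPolynomial ℕ ℝ

noncomputable def Ek (D : MvP →ₗ[ℝ] MvP) (k : ℕ) : MvP →ₗ[ℝ] MvP :=
  ((D : Module.End ℝ MvP) ^ k)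

lemma Ek_zero (D : MvP →ₗ[ℝ] MvP) (p : MvP) : Ek D 0 p = p := rfl

lemma Ek_succ (D : MvP →ₗ[ℝ] MvP) (k : ℕ) (p : MvP) :
    Ek D (k + 1) p = D (Ek D k p) := by
  simp [Ek, pow_succ', Module.End.mul_apply]

lemma Psi_node (ts : List PTree) :
    Psi (.node ts) = (ts.length.factorial : ℝ) • (X ts.length * (ts.map Psi).prod) := by
  rw [Psi]
  simp [Nat.cast_smul_eq_nsmul, List.attach_map_val]

lemma sum_map_flatMap {α β : Type*} (l : List α) (f : α → List β) (g : β → MvP) :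
    ((l.flatMap f).map g).sum = (l.map (fun a => ((f a).map g).sum)).sum := by
  induction l with
  | nil => simp
  | cons a l ih => simp [ih]

lemma D_one (D : MvP →ₗ[ℝ] MvP)
    (hLeib : ∀ p q : MvP, D (p * q) = D p * q + p * D q) : D 1 = 0 := by
  have := hLeib 1 1
  simp at this
  exact this

lemma distribs_length {α : Type} :
    ∀ (l : List α) (m : ℕ) (d : List (List α)), d ∈ distribs l m → d.length = m := by
  intro l
  induction l with
  | nil => intro m d h; simp [distribs] at h; simp [h]
  | cons a l ih =>
      intro m d h
      simp only [distribs, List.mem_flatMap, List.mem_map, List.mem_range] at h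
      obtain ⟨d', hd', i, hi, rfl⟩ := h
      simp [ih _ _ hd']

lemma childrenChoices_length :
    ∀ (cs : List PTree) (bins : List (List PTree)) (sel : List PTree),
      sel ∈ childrenChoices bins cs → sel.length = cs.length := by
  intro cs
  induction cs with
  | nil => intro bins sel h; simp [childrenChoices] at h; simp [h]
  | cons c cs ih =>
      intro bins sel h
      simp only [childrenChoices, List.mem_flatMap, List.mem_map] at h
      obtain ⟨c', _, rest, hrest, rfl⟩ := h
      simp [ih _ _ hrest]

lemma insAux_length (τ : PTree) :
    ∀ (cs : List PTree) (l : List PTree), l ∈ insAux τ cs → l.length = cs.length := by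
  intro cs
  induction cs with
  | nil => intro l h; simp [insAux] at h
  | cons c cs ih =>
      intro l h
      simp only [insAux, List.mem_append, List.mem_map] at h
      rcases h with ⟨x, _, rfl⟩ | ⟨l', hl', rfl⟩
      · simp
      · simp [ih _ hl']

lemma prod_map_set_cons (d : List (List PTree)) :
    ∀ (i : ℕ), i < d.length → ∀ (a : PTree),
      ((d.set i (a :: d.getD i [])).map (fun b => (b.map Psi).prod)).prod
        = Psi a * (d.map (fun b => (b.map Psi).prod)).prod := by
  induction d with
  | nil => intro i hi; simp at hi
  | cons b d ih =>
      intro i hi a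
      match i with
      | 0 => simp [mul_assoc]
      | (j+1) =>
          simp only [List.length_cons, add_lt_add_iff_right] at hi
          show ((b :: d.set j _).map _).prod = _
          simp only [List.getD_cons_succ, List.map_cons, List.prod_cons, ih j hi a]
          ring

lemma distribs_prod :
    ∀ (l : List PTree) (m : ℕ) (d : List (List PTree)), d ∈ distribs l m →
      (d.map (fun b => (b.map Psi).prod)).prod = (l.map Psi).prod := by
  intro l
  induction l with
  | nil =>
      intro m d h
      simp [distribs] at h
      subst h
      induction m with
      | zero => simp
      | succ m ihm => simpa [List.replicate_succ] using ihm
  | cons a l ih =>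
      intro m d h
      simp only [distribs, List.mem_flatMap, List.mem_map, List.mem_range] at h
      obtain ⟨d', hd', i, hi, rfl⟩ := h
      rw [prod_map_set_cons d' i (by rw [distribs_length l m d' hd']; exact hi) a,
        ih m d' hd']
      simp

/-- the product `Π_j D^{|bin_j|} q_j` -/
noncomputable def zprod (D : MvP →ₗ[ℝ] MvP) (bs : List (List PTree)) (qs : List MvP) : MvP :=
  ((bs.zip qs).map (fun p => Ek D p.1.length p.2)).prod

lemma zprod_replicate (D : MvP →ₗ[ℝ] MvP) (qs : List MvP) :
    zprod D (List.replicate qs.length []) qs = qs.prod := by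
  induction qs with
  | nil => simp [zprod]
  | cons q qs ih =>
      simp only [zprod, List.length_cons, List.replicate_succ, List.zip_cons_cons,
        List.map_cons, List.prod_cons] at *
      simp [ih, Ek_zero]

lemma D_zprod (D : MvP →ₗ[ℝ] MvP)
    (hLeib : ∀ p q : MvP, D (p * q) = D p * q + p * D q) (a : PTree) :
    ∀ (bs : List (List PTree)) (qs : List MvP), bs.length = qs.length →
      D (zprod D bs qs)
        = ((List.range bs.length).map
            (fun j => zprod D (bs.set j (a :: bs.getD j [])) qs)).sum := by
  intro bs
  induction bs with
  | nil =>
      intro qs h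
      simp [zprod, D_one D hLeib]
  | cons b bs ih =>
      intro qs h
      match qs with
      | [] => simp at h
      | q :: qs =>
          simp only [List.length_cons, add_left_inj] at h
          have expand : zprod D (b :: bs) (q :: qs)
              = Ek D b.length q * zprod D bs qs := by
            simp [zprod]
          rw [expand, hLeib, ih qs h, ← Ek_succ]
          simp only [List.length_cons]
          rw [List.range_succ_eq_map]
          have h0 : zprod D ((b :: bs).set 0 (a :: (b :: bs).getD 0 [])) (q :: qs)
              = Ek D (b.length + 1) q * zprod D bs qs := by
            simp [zprod]
          have hsucc : ∀ j : ℕ,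
              zprod D ((b :: bs).set (j + 1) (a :: (b :: bs).getD (j + 1) [])) (q :: qs)
                = Ek D b.length q * zprod D (bs.set j (a :: bs.getD j [])) qs := by
            intro j
            show zprod D (b :: bs.set j _) (q :: qs) = _
            simp [zprod]
          simp only [List.map_cons, List.sum_cons, List.map_map, Function.comp_def,
            Nat.succ_eq_add_one, hsucc, h0, List.sum_map_mul_left]

noncomputable def Hq (D : MvP →ₗ[ℝ] MvP) (qs : List MvP) (d : List (List PTree)) : MvP :=
  ((qs.length + (d.getD 0 []).length).factorial : ℝ) •
    (X (qs.length + (d.getD 0 []).length) * zprod D (d.drop 1) qs)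

lemma D_Hq (D : MvP →ₗ[ℝ] MvP)
    (hLeib : ∀ p q : MvP, D (p * q) = D p * q + p * D q)
    (hgen : ∀ k : ℕ, D (X k) = ((k : ℝ) + 1) • X (k + 1)) (a : PTree)
    (qs : List MvP) (d : List (List PTree)) (hd : d.length = qs.length + 1) :
    D (Hq D qs d)
      = ((List.range (qs.length + 1)).map
          (fun i => Hq D qs (d.set i (a :: d.getD i [])))).sum := by
  match d with
  | [] => simp at hd
  | b :: bs =>
      have hbs : bs.length = qs.length := by simpa using hd
      set n := qs.length with hn
      have hL : Hq D qs (b :: bs) = ((n + b.length).factorial : ℝ) •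
          (X (n + b.length) * zprod D bs qs) := by
        simp [Hq, hn]
      have h0 : Hq D qs ((b :: bs).set 0 (a :: (b :: bs).getD 0 []))
          = ((n + b.length + 1).factorial : ℝ) •
            (X (n + b.length + 1) * zprod D bs qs) := by
        show Hq D qs ((a :: b) :: bs) = _
        have e : n + (a :: b).length = n + b.length + 1 := by simp; omega
        simp only [Hq, List.getD_cons_zero, List.drop_succ_cons, List.drop_zero, e, hn]
        simp only [List.length_cons, Nat.add_assoc]
      have hsucc : ∀ j : ℕ,
          Hq D qs ((b :: bs).set (j + 1) (a :: (b :: bs).getD (j + 1) []))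
            = ((n + b.length).factorial : ℝ) •
              (X (n + b.length) * zprod D (bs.set j (a :: bs.getD j [])) qs) := by
        intro j
        show Hq D qs (b :: bs.set j _) = _
        simp [Hq, hn]
      rw [hL, List.range_succ_eq_map, List.map_cons, List.sum_cons, List.map_map,
        Function.comp_def]
      simp only [Nat.succ_eq_add_one, hsucc, h0]
      rw [map_smul, hLeib, hgen, D_zprod D hLeib a bs qs hbs]
      rw [smul_add]
      congr 1
      · rw [smul_mul_assoc, smul_smul, Nat.factorial_succ]
        push_cast
        ring_nf
      · have key : ∀ (l : List MvP) (c : ℝ) (p : MvP),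
            c • (p * l.sum) = (l.map (fun z => c • (p * z))).sum := by
          intro l
          induction l with
          | nil => simp
          | cons z l ih => intro c p; simp [mul_add, smul_add, ih]
        rw [key, List.map_map, Function.comp_def, hbs]

lemma lemB (D : MvP →ₗ[ℝ] MvP)
    (hLeib : ∀ p q : MvP, D (p * q) = D p * q + p * D q)
    (hgen : ∀ k : ℕ, D (X k) = ((k : ℝ) + 1) • X (k + 1)) :
    ∀ (τs : List PTree) (qs : List MvP),
      ((distribs τs (qs.length + 1)).map (Hq D qs)).sum
        = Ek D τs.length ((qs.length.factorial : ℝ) • (X qs.length * qs.prod)) := by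
  intro τs
  induction τs with
  | nil =>
      intro qs
      simp only [distribs, List.map_cons, List.map_nil, List.sum_cons, List.sum_nil,
        add_zero, List.length_nil, Ek_zero]
      have h1 : (List.replicate (qs.length + 1) ([] : List PTree)).getD 0 [] = [] := by
        simp [List.replicate_succ]
      have h2 : (List.replicate (qs.length + 1) ([] : List PTree)).drop 1
          = List.replicate qs.length [] := by
        simp [List.replicate_succ]
      simp [Hq, h1, h2, zprod_replicate]
  | cons a τs ih =>
      intro qs
      have hflat : distribs (a :: τs) (qs.length + 1)
          = (distribs τs (qs.length + 1)).flatMap (fun d =>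
              (List.range (qs.length + 1)).map (fun i => d.set i (a :: d.getD i []))) := by
        simp [distribs]
      rw [hflat, sum_map_flatMap]
      have hpt : ∀ d ∈ distribs τs (qs.length + 1),
          (((List.range (qs.length + 1)).map
              (fun i => d.set i (a :: d.getD i []))).map (Hq D qs)).sum
            = D (Hq D qs d) := by
        intro d hd
        rw [List.map_map]
        exact (D_Hq D hLeib hgen a qs d (distribs_length _ _ _ hd)).symm
      rw [List.map_congr_left hpt]
      have : (distribs τs (qs.length + 1)).map (fun d => D (Hq D qs d))
          = ((distribs τs (qs.length + 1)).map (Hq D qs)).map D := by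
        rw [List.map_map]; rfl
      rw [this, ← map_list_sum D, ih qs, ← Ek_succ]
      rfl

lemma smul_mul_list_sum (c : ℝ) (q : MvP) (L : List (List PTree)) :
    (L.map (fun sel => c • (q * (sel.map Psi).prod))).sum
      = c • (q * (L.map (fun sel => (sel.map Psi).prod)).sum) := by
  induction L with
  | nil => simp
  | cons x L ih => simp [mul_add, smul_add, ih]

lemma zip_fst_prod :
    ∀ (bins : List (List PTree)) (cs : List PTree), bins.length = cs.length →
      ((bins.zip cs).map (fun p => (p.1.map Psi).prod)).prod
        = (bins.map (fun b => (b.map Psi).prod)).prod := by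
  intro bins
  induction bins with
  | nil => intro cs h; simp
  | cons b bs ih =>
      intro cs h
      match cs with
      | [] => simp at h
      | c :: cs =>
          simp only [List.length_cons, add_left_inj] at h
          simp [ih cs h]

lemma zprod_eq_zip (D : MvP →ₗ[ℝ] MvP) :
    ∀ (bins : List (List PTree)) (cs : List PTree), bins.length = cs.length →
      ((bins.zip cs).map (fun p => Ek D p.1.length (Psi p.2))).prod
        = zprod D bins (cs.map Psi) := by
  intro bins
  induction bins with
  | nil => intro cs h; simp [zprod]
  | cons b bs ih =>
      intro cs h
      match cs with
      | [] => simp at h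
      | c :: cs =>
          simp only [List.length_cons, add_left_inj] at h
          have := ih cs h
          simp only [zprod] at this ⊢
          simp [this]

lemma prod_map_mul' (f g : List PTree × PTree → MvP) :
    ∀ (l : List (List PTree × PTree)),
      (l.map (fun p => f p * g p)).prod = (l.map f).prod * (l.map g).prod := by
  intro l
  induction l with
  | nil => simp
  | cons x l ih => simp [ih]; ring

mutual
theorem lemA (D : MvP →ₗ[ℝ] MvP)
    (hLeib : ∀ p q : MvP, D (p * q) = D p * q + p * D q)
    (hgen : ∀ k : ℕ, D (X k) = ((k : ℝ) + 1) • X (k + 1))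
    (τ : PTree) (τs : List PTree) :
    ((simGraft τs τ).map Psi).sum = (τs.map Psi).prod * Ek D τs.length (Psi τ) := by
  match τ with
  | .node cs =>
      have hopen : simGraft τs (.node cs)
          = (distribs τs (cs.length + 1)).flatMap (fun d =>
              (childrenChoices (d.drop 1) cs).map
                (fun sel => .node ((d.getD 0 []) ++ sel))) := by
        simp [simGraft]
      rw [hopen, sum_map_flatMap]
      have hd : ∀ d ∈ distribs τs (cs.length + 1),
          (((childrenChoices (d.drop 1) cs).map
              (fun sel => PTree.node ((d.getD 0 []) ++ sel))).map Psi).sum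
            = (τs.map Psi).prod * Hq D (cs.map Psi) d := by
        intro d hdm
        have hdl := distribs_length _ _ _ hdm
        match d with
        | [] => simp at hdl
        | b :: bs =>
            have hbins : bs.length = cs.length := by
              simp only [List.length_cons, add_left_inj] at hdl; exact hdl
            rw [List.map_map]
            have hsel : ∀ sel ∈ childrenChoices bs cs,
                (Psi ∘ fun sel => PTree.node (b ++ sel)) sel
                  = ((cs.length + b.length).factorial : ℝ) •
                    ((X (cs.length + b.length) * (b.map Psi).prod) *
                      (sel.map Psi).prod) := by
              intro sel hselm
              have hsl := childrenChoices_length cs bs sel hselm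
              have hlen : (b ++ sel).length = cs.length + b.length := by
                simp [hsl]; omega
              simp only [Function.comp_apply, Psi_node, hlen, List.map_append,
                List.prod_append]
              ring_nf
            have hgd : (b :: bs : List (List PTree)).getD 0 [] = b := rfl
            have hdr : (b :: bs : List (List PTree)).drop 1 = bs := rfl
            rw [hgd, hdr, List.map_congr_left hsel, smul_mul_list_sum,
              lemA' D hLeib hgen cs bs hbins, prod_map_mul',
              zip_fst_prod bs cs hbins, zprod_eq_zip D bs cs hbins]
            have hprod := distribs_prod τs (cs.length + 1) (b :: bs) hdm
            simp only [List.map_cons, List.prod_cons] at hprod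
            have hHq : Hq D (cs.map Psi) (b :: bs)
                = ((cs.length + b.length).factorial : ℝ) •
                  (X (cs.length + b.length) * zprod D bs (cs.map Psi)) := by
              simp [Hq]
            rw [hHq, ← hprod]
            simp only [smul_eq_C_mul]
            ring
      rw [List.map_congr_left hd, List.sum_map_mul_left]
      rw [show distribs τs (cs.length + 1) = distribs τs ((cs.map Psi).length + 1) by simp]
      rw [lemB D hLeib hgen τs (cs.map Psi), Psi_node]
      simp
  termination_by sizeOf τ

theorem lemA' (D : MvP →ₗ[ℝ] MvP)
    (hLeib : ∀ p q : MvP, D (p * q) = D p * q + p * D q)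
    (hgen : ∀ k : ℕ, D (X k) = ((k : ℝ) + 1) • X (k + 1))
    (cs : List PTree) (bins : List (List PTree)) (h : bins.length = cs.length) :
    ((childrenChoices bins cs).map (fun sel => (sel.map Psi).prod)).sum
      = ((bins.zip cs).map
          (fun p => (p.1.map Psi).prod * Ek D p.1.length (Psi p.2))).prod := by
  match cs, bins with
  | [], bins => simp [childrenChoices]
  | c :: cs, [] => simp at h
  | c :: cs, b :: bs =>
      have hbs : bs.length = cs.length := by
        simp only [List.length_cons, add_left_inj] at h; exact h
      have hopen : childrenChoices (b :: bs) (c :: cs)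
          = (simGraft b c).flatMap (fun c' =>
              (childrenChoices bs cs).map (fun rest => c' :: rest)) := by
        simp [childrenChoices]
      rw [hopen, sum_map_flatMap]
      have hpt : ∀ c' ∈ simGraft b c,
          (((childrenChoices bs cs).map (fun rest => c' :: rest)).map
              (fun sel => (sel.map Psi).prod)).sum
            = Psi c' * ((childrenChoices bs cs).map
                (fun sel => (sel.map Psi).prod)).sum := by
        intro c' _
        rw [List.map_map]
        simp only [Function.comp_def, List.map_cons, List.prod_cons]
        rw [List.sum_map_mul_left]
      rw [List.map_congr_left hpt, List.sum_map_mul_right,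
        lemA D hLeib hgen c b, lemA' D hLeib hgen cs bs hbs]
      simp
  termination_by sizeOf cs
end

lemma triIns_eq_sum (D : MvP →ₗ[ℝ] MvP) (π π' : MvP) (s : Finset ℕ) (hs : π'.vars ⊆ s) :
    triIns D π π' = ∑ k ∈ s, ((Nat.factorial k : ℝ))⁻¹ • (Ek D k π * pderiv k π') := by
  simp only [triIns, Ek]
  exact Finset.sum_subset hs fun k _ hk => by
    rw [pderiv_eq_zero_of_notMem_vars hk]; simp

/-- collected variables of the `Psi` of a list of trees -/
noncomputable def varsU : List PTree → Finset ℕ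
  | [] => ∅
  | c :: cs => (Psi c).vars ∪ varsU cs

lemma varsU_subset : ∀ (cs : List PTree), ∀ c ∈ cs, (Psi c).vars ⊆ varsU cs := by
  intro cs
  induction cs with
  | nil => simp
  | cons c cs ih =>
      intro c' hc'
      rcases hc' with _ | hc'
      · exact Finset.subset_union_left
      · exact (ih c' (by assumption)).trans Finset.subset_union_right

mutual
theorem mainCore (D : MvP →ₗ[ℝ] MvP)
    (hLeib : ∀ p q : MvP, D (p * q) = D p * q + p * D q)
    (hgen : ∀ k : ℕ, D (X k) = ((k : ℝ) + 1) • X (k + 1))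
    (τ' : PTree) (τ : PTree) :
    ((ins τ τ').map Psi).sum = triIns D (Psi τ) (Psi τ') := by
  match τ' with
  | .node cs =>
      set n := cs.length with hn
      set s : Finset ℕ := (Psi (.node cs)).vars ∪ insert n (varsU cs) with hs
      have hsub : (Psi (.node cs)).vars ⊆ s := Finset.subset_union_left
      have hcs : ∀ c ∈ cs, (Psi c).vars ⊆ s := fun c hc =>
        (varsU_subset cs c hc).trans
          ((Finset.subset_insert _ _).trans Finset.subset_union_right)
      have hns : n ∈ s := Finset.mem_union_right _ (Finset.mem_insert_self _ _)
      have hopen : ins τ (.node cs) = simGraft cs τ ++ (insAux τ cs).map .node := by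
        simp [ins]
      rw [hopen, List.map_append, List.sum_append, lemA D hLeib hgen τ cs]
      have h2 : (((insAux τ cs).map PTree.node).map Psi).sum
          = (n.factorial : ℝ) •
            (X n * ((insAux τ cs).map (fun l => (l.map Psi).prod)).sum) := by
        rw [List.map_map]
        rw [List.map_congr_left (f := Psi ∘ PTree.node)
          (g := fun l => (n.factorial : ℝ) • (X n * (l.map Psi).prod))
          (fun l hl => by
            simp only [Function.comp_apply, Psi_node, insAux_length τ cs l hl, hn])]
        rw [smul_mul_list_sum]
      rw [h2, mainAux D hLeib hgen cs τ s hcs,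
        triIns_eq_sum D (Psi τ) (Psi (.node cs)) s hsub]
      have hsplit : ∀ k : ℕ,
          ((k.factorial : ℝ))⁻¹ • (Ek D k (Psi τ) * pderiv k (Psi (.node cs)))
            = (if k = n then (cs.map Psi).prod * Ek D n (Psi τ) else 0)
              + (n.factorial : ℝ) • (X n *
                  (((k.factorial : ℝ))⁻¹ •
                    (Ek D k (Psi τ) * pderiv k ((cs.map Psi).prod)))) := by
        intro k
        rw [Psi_node, Derivation.map_smul, pderiv_mul, ← hn]
        by_cases hkn : k = n
        · rw [if_pos hkn, hkn, pderiv_X_self, one_mul]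
          have hfac : ((n.factorial : ℝ))⁻¹ * (n.factorial : ℝ) = 1 :=
            inv_mul_cancel₀ (by exact_mod_cast n.factorial_ne_zero)
          have hfac' : (n.factorial : ℝ) * ((n.factorial : ℝ))⁻¹ = 1 := by
            rw [mul_comm]; exact hfac
          simp only [mul_smul_comm, smul_smul]
          rw [hfac, hfac', one_smul, one_smul]
          ring
        · rw [if_neg hkn, pderiv_X_of_ne (fun hh => hkn hh.symm), zero_mul, zero_add,
            zero_add]
          simp only [mul_smul_comm, smul_smul]
          rw [mul_comm ((k.factorial : ℝ))⁻¹ (n.factorial : ℝ)]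
          ring
      rw [Finset.sum_congr rfl (fun k _ => hsplit k), Finset.sum_add_distrib,
        Finset.sum_ite_eq' s n, if_pos hns, ← Finset.smul_sum, ← Finset.mul_sum]
  termination_by sizeOf τ'

theorem mainAux (D : MvP →ₗ[ℝ] MvP)
    (hLeib : ∀ p q : MvP, D (p * q) = D p * q + p * D q)
    (hgen : ∀ k : ℕ, D (X k) = ((k : ℝ) + 1) • X (k + 1))
    (cs : List PTree) (τ : PTree) (s : Finset ℕ)
    (h : ∀ c ∈ cs, (Psi c).vars ⊆ s) :
    ((insAux τ cs).map (fun l => (l.map Psi).prod)).sum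
      = ∑ k ∈ s, ((Nat.factorial k : ℝ))⁻¹ •
          (Ek D k (Psi τ) * pderiv k ((cs.map Psi).prod)) := by
  match cs with
  | [] => simp [insAux]
  | c :: cs =>
      have hopen : insAux τ (c :: cs)
          = ((ins τ c).map (· :: cs)) ++ ((insAux τ cs).map (c :: ·)) := by
        simp [insAux]
      rw [hopen, List.map_append, List.sum_append]
      have h1 : (((ins τ c).map (· :: cs)).map (fun l => (l.map Psi).prod)).sum
          = ((ins τ c).map Psi).sum * (cs.map Psi).prod := by
        rw [List.map_map]
        simp only [Function.comp_def, List.map_cons, List.prod_cons]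
        rw [List.sum_map_mul_right]
      have h2 : (((insAux τ cs).map (c :: ·)).map (fun l => (l.map Psi).prod)).sum
          = Psi c * ((insAux τ cs).map (fun l => (l.map Psi).prod)).sum := by
        rw [List.map_map]
        simp only [Function.comp_def, List.map_cons, List.prod_cons]
        rw [List.sum_map_mul_left]
      rw [h1, h2, mainCore D hLeib hgen c τ,
        triIns_eq_sum D (Psi τ) (Psi c) s (h c (by simp)),
        mainAux D hLeib hgen cs τ s (fun c' hc' => h c' (by simp [hc']))]
      rw [Finset.sum_mul, Finset.mul_sum, ← Finset.sum_add_distrib]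
      apply Finset.sum_congr rfl
      intro k _
      simp only [List.map_cons, List.prod_cons, pderiv_mul, smul_eq_C_mul]
      ring
  termination_by sizeOf cs
end

/-- For `𝔏` a singleton: `Ψ` intertwines the insertion product of rooted trees with the
insertion pre-Lie product `π ▷ π' = Σ_k (1/k!)(D^k π) ∂_{z_k} π'` on polynomials, where
`D = Σ_k (k+1) z_{k+1} ∂_{z_k}`: `Ψ[τ ▷_ins τ'] = Ψ[τ] ▷ Ψ[τ']`. -/
theorem Psi_insertion_preLie_morphism
    (D : MvPolynomial ℕ ℝ →ₗ[ℝ] MvPolynomial ℕ ℝ)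
    (hLeib : ∀ p q : MvPolynomial ℕ ℝ, D (p * q) = D p * q + p * D q)
    (hgen : ∀ k : ℕ, D (X k) = ((k : ℝ) + 1) • X (k + 1)) :
    ∀ τ τ' : PTree, ((ins τ τ').map Psi).sum = triIns D (Psi τ) (Psi τ') := by
  intro τ τ'
  exact mainCore D hLeib hgen τ' τ
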